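/- Every induced subgraph of a t-perfect finite simple graph is t-perfect. -/

import Mathlib

open Finset SimpleGraph

namespace TPerfection

variable {V : Type*}

/-- A stable (independent) set of vertices: pairwise non-adjacent. -/
def IsStableSet (G : SimpleGraph V) (S : Finset V) : Prop :=
  ∀ u ∈ S, ∀ v ∈ S, ¬ G.Adj u v

/-- STAB(G): convex hull of incidence vectors of stable sets. -/
def stabPolytope (G : SimpleGraph V) [Fintype V] [DecidableEq V] : Set (V → ℝ) :=
  convexHull ℝ { x | ∃ S : Finset V, IsStableSet G S ∧ x = fun v => if v ∈ S then (1 : ℝ) else 0 }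

/-- `c` is an induced (chordless) cycle of `G`. -/
def IsInducedCycle (G : SimpleGraph V) {u : V} (c : G.Walk u u) : Prop :=
  c.IsCycle ∧ ∀ x y : V, x ∈ c.support → y ∈ c.support → G.Adj x y → s(x, y) ∈ c.edges

def boxConstraints (x : V → ℝ) : Prop := ∀ v, 0 ≤ x v ∧ x v ≤ 1

def edgeConstraints (G : SimpleGraph V) (x : V → ℝ) : Prop :=
  ∀ u v : V, G.Adj u v → x u + x v ≤ 1

def cliqueConstraints (G : SimpleGraph V) (x : V → ℝ) : Prop :=
  ∀ K : Finset V, G.IsClique (K : Set V) → ∑ v ∈ K, x v ≤ 1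

def oddCycleConstraints [DecidableEq V] (G : SimpleGraph V) (x : V → ℝ) : Prop :=
  ∀ (u : V) (c : G.Walk u u), IsInducedCycle G c → Odd c.length →
    ∑ v ∈ c.support.toFinset, x v ≤ ((c.length : ℝ) - 1) / 2

/-- Solution set of box, edge and odd-cycle constraints. -/
def tPolytope (G : SimpleGraph V) [DecidableEq V] : Set (V → ℝ) :=
  { x | boxConstraints x ∧ edgeConstraints G x ∧ oddCycleConstraints G x }

/-- Solution set of box, clique and odd-cycle constraints. -/
def hPolytope (G : SimpleGraph V) [DecidableEq V] : Set (V → ℝ) :=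
  { x | boxConstraints x ∧ cliqueConstraints G x ∧ oddCycleConstraints G x }

/-- Solution set of box and clique constraints. -/
def qstabPolytope (G : SimpleGraph V) : Set (V → ℝ) :=
  { x | boxConstraints x ∧ cliqueConstraints G x }

def TPerfect (G : SimpleGraph V) [Fintype V] [DecidableEq V] : Prop :=
  tPolytope G = stabPolytope G

def HPerfect (G : SimpleGraph V) [Fintype V] [DecidableEq V] : Prop :=
  hPolytope G = stabPolytope G

/-- The clique number, as an extended natural number. -/
noncomputable def cliqueNumber (G : SimpleGraph V) : ℕ∞ :=
  sSup ((fun n : ℕ => (n : ℕ∞)) '' { n | ∃ K : Finset V, G.IsNClique n K })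

/-- A graph is perfect if every induced subgraph has chromatic number equal to
clique number. -/
def IsPerfect (G : SimpleGraph V) : Prop :=
  ∀ S : Set V, (G.induce S).chromaticNumber = cliqueNumber (G.induce S)

/-- `G` is a loose wheel with hub `hub` and rim `c`: `c` is a cycle, `hub` lies outside
of it and has at least three neighbours on it, and the rim together with the hub
comprise all vertices and edges of `G`. -/
structure IsLooseWheel (G : SimpleGraph V) (hub : V) {u : V} (c : G.Walk u u) : Prop where
  isCycle : c.IsCycle
  hub_not_mem : hub ∉ c.support
  spokes : ∃ w₁ w₂ w₃ : V, w₁ ∈ c.support ∧ w₂ ∈ c.support ∧ w₃ ∈ c.support ∧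
    w₁ ≠ w₂ ∧ w₁ ≠ w₃ ∧ w₂ ≠ w₃ ∧ G.Adj hub w₁ ∧ G.Adj hub w₂ ∧ G.Adj hub w₃
  vertex_cover : ∀ w : V, w ∈ c.support ∨ w = hub
  edge_cover : ∀ x y : V, G.Adj x y → s(x, y) ∈ c.edges ∨ x = hub ∨ y = hub

/-- A segment of a loose wheel: a path of the rim joining two neighbours of the hub
and containing no other neighbour of the hub. -/
def IsSegment (G : SimpleGraph V) (hub : V) {u : V} (c : G.Walk u u)
    {a b : V} (p : G.Walk a b) : Prop :=
  p.IsPath ∧ a ≠ b ∧ G.Adj hub a ∧ G.Adj hub b ∧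
    (∀ e ∈ p.edges, e ∈ c.edges) ∧
    (∀ w ∈ p.support, G.Adj hub w → w = a ∨ w = b)

/-- `G` is a loose odd wheel: a loose wheel with odd rim having at least three
(pairwise distinct, hence pairwise edge-disjoint) segments of odd length. -/
def IsLooseOddWheel [DecidableEq V] (G : SimpleGraph V) : Prop :=
  ∃ (hub u : V) (c : G.Walk u u), IsLooseWheel G hub c ∧ Odd c.length ∧
    ∃ (a₁ b₁ : V) (p₁ : G.Walk a₁ b₁) (a₂ b₂ : V) (p₂ : G.Walk a₂ b₂)
      (a₃ b₃ : V) (p₃ : G.Walk a₃ b₃),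
      IsSegment G hub c p₁ ∧ IsSegment G hub c p₂ ∧ IsSegment G hub c p₃ ∧
      Odd p₁.length ∧ Odd p₂.length ∧ Odd p₃.length ∧
      Disjoint p₁.edges.toFinset p₂.edges.toFinset ∧
      Disjoint p₁.edges.toFinset p₃.edges.toFinset ∧
      Disjoint p₂.edges.toFinset p₃.edges.toFinset

/-- The neighbourhood of `v` is a stable set. -/
def StableNeighborhood (G : SimpleGraph V) (v : V) : Prop :=
  ∀ x y : V, G.Adj v x → G.Adj v y → ¬ G.Adj x y

/-- The t-contraction of `G` at `v`: delete `{v} ∪ N(v)` and add a new vertex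
(`none`) adjacent exactly to the remaining vertices having a neighbour in `N(v)`. -/
def tContract (G : SimpleGraph V) (v : V) :
    SimpleGraph (Option { w : V // w ≠ v ∧ ¬ G.Adj v w }) where
  Adj x y :=
    match x, y with
    | none, none => False
    | none, some b => ∃ n, G.Adj v n ∧ G.Adj b.1 n
    | some a, none => ∃ n, G.Adj v n ∧ G.Adj a.1 n
    | some a, some b => G.Adj a.1 b.1
  symm := by
    constructor
    rintro (_ | a) (_ | b) h
    · exact h
    · exact h
    · exact h
    · exact h.symm
  loopless := by
    constructor
    rintro (_ | a) h
    · exact h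
    · exact G.loopless.irrefl _ h

/-- The wheel with hub `none` and rim the cycle of length `k` on `Fin k`. -/
def wheelGraph (k : ℕ) : SimpleGraph (Option (Fin k)) where
  Adj x y :=
    match x, y with
    | none, none => False
    | none, some _ => True
    | some _, none => True
    | some i, some j => i ≠ j ∧ ((i.1 + 1) % k = j.1 ∨ (j.1 + 1) % k = i.1)
  symm := by
    constructor
    rintro (_ | i) (_ | j) h
    · exact h
    · trivial
    · trivial
    · exact ⟨h.1.symm, h.2.symm⟩
  loopless := by
    constructor
    rintro (_ | i) h
    · exact h
    · exact h.1 rfl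

/-- One step of t-contraction between (isomorphism classes of) graphs. -/
def TContractStep : (Σ α : Type, SimpleGraph α) → (Σ α : Type, SimpleGraph α) → Prop :=
  fun G H => ∃ v : G.1, StableNeighborhood G.2 v ∧ Nonempty (H.2 ≃g tContract G.2 v)


private lemma walk_sum {W : Type*} {G : SimpleGraph W} (y : W → ℝ)
    (hb : ∀ v, y v ≤ 1) (he : ∀ u v, G.Adj u v → y u + y v ≤ 1) :
    ∀ {a b : W} (q : G.Walk a b), (q.support.map y).sum ≤ (((q.length + 2) / 2 : ℕ) : ℝ)
  | _, _, Walk.nil => by simpa using hb _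
  | _, _, Walk.cons h Walk.nil => by
      simp only [Walk.support_cons, Walk.support_nil, List.map_cons, List.map_nil,
        List.sum_cons, List.sum_nil, add_zero, Walk.length_cons, Walk.length_nil]
      calc _ ≤ (1 : ℝ) := he _ _ h
        _ ≤ _ := by norm_num
  | a, b, Walk.cons h (Walk.cons h' q) => by
      have ih := walk_sum y hb he q
      have hedge := he _ _ h
      simp only [Walk.support_cons, List.map_cons, List.sum_cons, Walk.length_cons]
      have hn : ((q.length + 2) / 2 : ℕ) + 1 = ((q.length + 1 + 1 + 2) / 2 : ℕ) := by omega
      have : (((q.length + 1 + 1 + 2) / 2 : ℕ) : ℝ) = (((q.length + 2) / 2 : ℕ) : ℝ) + 1 := by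
        rw [← hn]; push_cast; ring
      rw [this]
      linarith

private lemma closed_support_toFinset {W : Type*} [DecidableEq W] {G : SimpleGraph W}
    {w : W} {p : G.Walk w w} (hp : ¬ p.Nil) :
    p.support.toFinset = p.support.tail.toFinset := by
  obtain ⟨u, hadj, q, rfl⟩ := Walk.not_nil_iff.mp hp
  simp only [Walk.support_cons, List.tail_cons, List.toFinset_cons]
  exact Finset.insert_eq_self.mpr (by simp [q.end_mem_support])

private lemma oddcycle_bound {W : Type*} [DecidableEq W] {G : SimpleGraph W} {y : W → ℝ}
    (hb : ∀ v, y v ≤ 1) (he : ∀ u v, G.Adj u v → y u + y v ≤ 1)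
    {u : W} {c : G.Walk u u} (hc : c.IsCycle) (hodd : Odd c.length)
    {w : W} (hw : w ∈ c.support) (hyw : y w = 0) :
    ∑ v ∈ c.support.toFinset, y v ≤ ((c.length : ℝ) - 1) / 2 := by
  set d := c.rotate w hw with hd
  have hdc : d.IsCycle := hc.rotate hw
  have hlen : d.length = c.length := by
    have h1 := congrArg Walk.length (c.take_spec hw)
    rw [Walk.length_append] at h1
    have h2 : d.length = (c.dropUntil w hw).length + (c.takeUntil w hw).length := by
      rw [hd, Walk.rotate, Walk.length_append]
    omega
  have hcnil : ¬ c.Nil := by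
    rw [Walk.not_nil_iff_lt_length]; have := hc.three_le_length; omega
  have hdnil : ¬ d.Nil := by
    rw [Walk.not_nil_iff_lt_length, hlen]; have := hc.three_le_length; omega
  have hsupp : c.support.toFinset = d.support.toFinset := by
    rw [closed_support_toFinset hcnil, closed_support_toFinset hdnil]
    exact (List.toFinset_eq_of_perm _ _ (Walk.support_rotate c w hw).perm).symm
  obtain ⟨v1, hadj, q, hq⟩ := Walk.not_nil_iff.mp hdnil
  have hqnodup : q.support.Nodup := by
    have := hdc.support_nodup
    rwa [hq, Walk.support_cons, List.tail_cons] at this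
  have hqlen : q.length = c.length - 1 := by
    have : d.length = q.length + 1 := by rw [hq, Walk.length_cons]
    omega
  have hsum : ∑ v ∈ c.support.toFinset, y v = (q.support.map y).sum := by
    rw [hsupp, closed_support_toFinset hdnil, hq, Walk.support_cons, List.tail_cons]
    exact List.sum_toFinset y hqnodup
  have hqrnil : ¬ q.reverse.Nil := by
    rw [Walk.not_nil_iff_lt_length, Walk.length_reverse]
    have := hc.three_le_length; omega
  obtain ⟨v2, hadj2, r, hr⟩ := Walk.not_nil_iff.mp hqrnil
  have hrlen : r.length = c.length - 2 := by
    have : q.reverse.length = r.length + 1 := by rw [hr, Walk.length_cons]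
    rw [Walk.length_reverse] at this
    have := hc.three_le_length
    omega
  have hsum2 : (q.support.map y).sum = (r.support.map y).sum := by
    have h1 : (q.support.map y).sum = (q.reverse.support.map y).sum := by
      rw [Walk.support_reverse, List.map_reverse, List.sum_reverse]
    rw [h1, hr, Walk.support_cons, List.map_cons, List.sum_cons, hyw, zero_add]
  have hbd := walk_sum y hb he r
  obtain ⟨k, hk⟩ := hodd
  have hk1 : 1 ≤ k := by have := hc.three_le_length; omega
  have hdiv : ((r.length + 2) / 2 : ℕ) = k := by omega
  rw [hsum, hsum2]
  calc (r.support.map y).sum ≤ (((r.length + 2) / 2 : ℕ) : ℝ) := hbd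
    _ = (k : ℝ) := by rw [hdiv]
    _ ≤ ((c.length : ℝ) - 1) / 2 := by rw [hk]; push_cast; linarith

private def liftWalk {W : Type*} {G : SimpleGraph W} (S : Set W) :
    ∀ {a b : W} (q : G.Walk a b) (hs : ∀ v ∈ q.support, v ∈ S),
      (G.induce S).Walk ⟨a, hs a q.start_mem_support⟩ ⟨b, hs b q.end_mem_support⟩
  | _, _, Walk.nil, _ => Walk.nil
  | _, _, Walk.cons h q, hs =>
      Walk.cons (by exact h)
        (liftWalk S q (fun v hv => hs v (by simp [Walk.support_cons, hv])))

private lemma liftWalk_map {W : Type*} {G : SimpleGraph W} (S : Set W) :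
    ∀ {a b : W} (q : G.Walk a b) (hs : ∀ v ∈ q.support, v ∈ S),
      Walk.map (SimpleGraph.Embedding.induce S).toHom (liftWalk S q hs) = q
  | _, _, Walk.nil, _ => rfl
  | _, _, Walk.cons h q, hs => by
      simp only [liftWalk, Walk.map_cons]
      congr 1
      exact congrArg (Walk.cons h) (liftWalk_map S q _)

private lemma stab_subset_tPolytope {W : Type*} [Fintype W] [DecidableEq W]
    (H : SimpleGraph W) : stabPolytope H ⊆ tPolytope H := by
  apply convexHull_min
  · rintro x ⟨T, hT, rfl⟩
    have hb : ∀ v, (if v ∈ T then (1:ℝ) else 0) ≤ 1 := fun v => by split <;> norm_num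
    have he : ∀ a b, H.Adj a b →
        (if a ∈ T then (1:ℝ) else 0) + (if b ∈ T then (1:ℝ) else 0) ≤ 1 := by
      intro a b hab
      by_cases ha : a ∈ T
      · by_cases hbm : b ∈ T
        · exact absurd hab (hT a ha b hbm)
        · simp [ha, hbm]
      · by_cases hbm : b ∈ T <;> simp [ha, hbm]
    refine ⟨fun v => ⟨by dsimp only; split <;> norm_num, hb v⟩, he, ?_⟩
    intro u c hc hodd
    have hcnil : ¬ c.Nil := by
      rw [Walk.not_nil_iff_lt_length]; have := hc.1.three_le_length; omega
    obtain ⟨v1, hadj, q, hq⟩ := Walk.not_nil_iff.mp hcnil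
    have hv1 : v1 ∈ c.support := by
      rw [hq, Walk.support_cons]; exact List.mem_cons_of_mem _ q.start_mem_support
    have hu : u ∈ c.support := c.start_mem_support
    have hor : u ∉ T ∨ v1 ∉ T := by
      by_contra hcon; push_neg at hcon; exact hT u hcon.1 v1 hcon.2 hadj
    rcases hor with h0 | h0
    · exact oddcycle_bound hb he hc.1 hodd hu (by simp [h0])
    · exact oddcycle_bound hb he hc.1 hodd hv1 (by simp [h0])
  · intro p hp q hq a b ha hb hab
    obtain ⟨hpb, hpe, hpo⟩ := hp
    obtain ⟨hqb, hqe, hqo⟩ := hq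
    have hval : ∀ v, (a • p + b • q) v = a * p v + b * q v := fun v => rfl
    refine ⟨?_, ?_, ?_⟩
    · intro v
      have h1 := hpb v; have h2 := hqb v
      rw [hval]
      constructor
      · nlinarith [h1.1, h2.1]
      · nlinarith [h1.2, h2.2]
    · intro x y hxy
      have h1 := hpe x y hxy; have h2 := hqe x y hxy
      rw [hval, hval]
      nlinarith [mul_le_mul_of_nonneg_left h1 ha, mul_le_mul_of_nonneg_left h2 hb]
    · intro u c hc hodd
      have h1 := hpo u c hc hodd; have h2 := hqo u c hc hodd
      have hsum : ∑ v ∈ c.support.toFinset, (a • p + b • q) v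
          = a * ∑ v ∈ c.support.toFinset, p v + b * ∑ v ∈ c.support.toFinset, q v := by
        rw [Finset.mul_sum, Finset.mul_sum, ← Finset.sum_add_distrib]
        exact Finset.sum_congr rfl fun v _ => hval v
      rw [hsum]
      have hcomb : a * ((↑c.length - 1) / 2) + b * ((↑c.length - 1) / 2)
          = ((c.length : ℝ) - 1) / 2 := by rw [← add_mul, hab, one_mul]
      nlinarith [mul_le_mul_of_nonneg_left h1 ha, mul_le_mul_of_nonneg_left h2 hb]

/-- Every induced subgraph of a t-perfect finite simple graph is
t-perfect. -/
theorem tPerfect_induce {V : Type*} [Fintype V] [DecidableEq V] (G : SimpleGraph V)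
    (h : TPerfect G) (S : Set V) [Fintype S] :
    TPerfect (G.induce S) := by
  classical
  apply Set.Subset.antisymm
  · intro x hx
    obtain ⟨hbox, hedge, hoddx⟩ := hx
    set y : V → ℝ := fun v => if hv : v ∈ S then x ⟨v, hv⟩ else 0 with hy
    have hyval : ∀ (v : V) (hv : v ∈ S), y v = x ⟨v, hv⟩ := fun v hv => dif_pos hv
    have hyb : boxConstraints y := by
      intro v
      by_cases hv : v ∈ S
      · rw [hyval v hv]; exact hbox _
      · simp [hy, hv]
    have hye : edgeConstraints G y := by
      intro a b hab
      by_cases ha : a ∈ S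
      · by_cases hb : b ∈ S
        · rw [hyval a ha, hyval b hb]
          exact hedge ⟨a, ha⟩ ⟨b, hb⟩ hab
        · rw [show y b = 0 from dif_neg hb, add_zero, hyval a ha]
          exact (hbox _).2
      · rw [show y a = 0 from dif_neg ha, zero_add]
        by_cases hb : b ∈ S
        · rw [hyval b hb]; exact (hbox _).2
        · rw [show y b = 0 from dif_neg hb]; norm_num
    have hyo : oddCycleConstraints G y := by
      intro u c hc hodd
      by_cases hall : ∀ v ∈ c.support, v ∈ S
      · let c' : (G.induce S).Walk ⟨u, hall u c.start_mem_support⟩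
            ⟨u, hall u c.start_mem_support⟩ := liftWalk S c hall
        have hmap : Walk.map (SimpleGraph.Embedding.induce S).toHom c' = c :=
          liftWalk_map S c hall
        have hsm : c.support
            = c'.support.map (SimpleGraph.Embedding.induce (G := G) S).toHom := by
          have hsm0 := Walk.support_map (SimpleGraph.Embedding.induce S).toHom c'
          rw [hmap] at hsm0
          exact hsm0
        have hinj : Function.Injective
            ((SimpleGraph.Embedding.induce (G := G) S).toHom : ↥S → V) :=
          Subtype.val_injective
        have hc'cyc : c'.IsCycle :=
          (Walk.map_isCycle_iff_of_injective hinj).mp (by rw [hmap]; exact hc.1)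
        have hlen' : c'.length = c.length := by
          have hlm := Walk.length_map (SimpleGraph.Embedding.induce S).toHom c'
          rw [hmap] at hlm
          exact hlm.symm
        have hc'ind : IsInducedCycle (G.induce S) c' := by
          refine ⟨hc'cyc, ?_⟩
          intro xv yv hxs hys hadj
          have hadj' : G.Adj xv.1 yv.1 := hadj
          have hxm : xv.1 ∈ c.support := by
            rw [hsm]
            exact List.mem_map_of_mem hxs
          have hym : yv.1 ∈ c.support := by
            rw [hsm]
            exact List.mem_map_of_mem hys
          have hmem := hc.2 xv.1 yv.1 hxm hym hadj'
          have hem : c.edges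
              = c'.edges.map (Sym2.map (SimpleGraph.Embedding.induce (G := G) S).toHom) := by
            have hem0 := Walk.edges_map (SimpleGraph.Embedding.induce S).toHom c'
            rw [hmap] at hem0
            exact hem0
          rw [hem] at hmem
          obtain ⟨e, he, hee⟩ := List.mem_map.mp hmem
          have : e = s(xv, yv) := by
            apply Sym2.map.injective hinj
            rw [hee, Sym2.map_pair_eq]
            rfl
          rwa [this] at he
        have hx' := hoddx _ c' hc'ind (by rwa [hlen'])
        rw [hlen'] at hx'
        have hsupp : c.support.toFinset
            = c'.support.toFinset.image (fun v : ↥S => (v : V)) := by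
          rw [hsm]
          ext v
          simp only [List.mem_toFinset, List.mem_map, Finset.mem_image]
          constructor
          · rintro ⟨a, ha, rfl⟩; exact ⟨a, by simpa using ha, rfl⟩
          · rintro ⟨a, ha, rfl⟩; exact ⟨a, by simpa using ha, rfl⟩
        have hsum : ∑ v ∈ c.support.toFinset, y v = ∑ v ∈ c'.support.toFinset, x v := by
          rw [hsupp, Finset.sum_image (fun a _ b _ hab => Subtype.val_injective hab)]
          refine Finset.sum_congr rfl fun v _ => ?_
          rw [hyval v.1 v.2]
        rw [hsum]
        exact hx'
      · push_neg at hall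
        obtain ⟨w, hw, hws⟩ := hall
        exact oddcycle_bound (fun v => (hyb v).2) hye hc.1 hodd hw (dif_neg hws)
    have hymem : y ∈ stabPolytope G := h ▸ (⟨hyb, hye, hyo⟩ : y ∈ tPolytope G)
    let res : (V → ℝ) →ₗ[ℝ] (↥S → ℝ) := LinearMap.funLeft ℝ ℝ Subtype.val
    have hresy : res y = x := by
      funext v
      show y v.1 = x v
      rw [hyval v.1 v.2]
    have himg : res y ∈ res '' (stabPolytope G) := Set.mem_image_of_mem _ hymem
    rw [stabPolytope, res.image_convexHull] at himg
    have hsub : res '' { x0 | ∃ T : Finset V, IsStableSet G T ∧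
          x0 = fun v => if v ∈ T then (1 : ℝ) else 0 }
        ⊆ { x0 | ∃ T : Finset ↥S, IsStableSet (G.induce S) T ∧
          x0 = fun v => if v ∈ T then (1 : ℝ) else 0 } := by
      rintro z ⟨w0, ⟨T, hT, rfl⟩, rfl⟩
      refine ⟨T.subtype (· ∈ S), ?_, ?_⟩
      · intro a ha b hb hadj
        rw [Finset.mem_subtype] at ha hb
        exact hT a.1 ha b.1 hb hadj
      · funext v
        show (if (v : V) ∈ T then (1 : ℝ) else 0) = _
        simp [Finset.mem_subtype]
    have hfin := convexHull_mono hsub himg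
    rw [hresy] at hfin
    exact hfin
  · exact stab_subset_tPolytope _


end TPerfection
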